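/- The quotient space X_T = T³ / ι is simply connected. -/

import Mathlib

/-- The 3-torus, the product of three copies of the unit circle in `ℂ`. -/
abbrev T3 : Type := Circle × Circle × Circle

/-- The involution `ι(z₁, z₂, z₃) = (z₁⁻¹, z₂⁻¹, z₃⁻¹)` on the 3-torus, i.e.
complex conjugation in each factor. -/
noncomputable def torusInv : T3 → T3 := fun p => (p.1⁻¹, p.2.1⁻¹, p.2.2⁻¹)

/-- The quotient space `X_T = T³ / ι` of the 3-torus by the equivalence relation
identifying each point `p` with `ι p`, equipped with the quotient topology. -/
abbrev XT : Type := Quot (fun p q : T3 => torusInv p = q)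

namespace XTProof

open Set CategoryTheory

noncomputable abbrev qm : T3 → XT := Quot.mk (fun p q : T3 => torusInv p = q)

lemma torusInv_invol : Function.Involutive torusInv := by
  intro p; simp [torusInv]

lemma continuous_torusInv : Continuous torusInv := by
  unfold torusInv; fun_prop

lemma qm_torusInv (p : T3) : qm (torusInv p) = qm p :=
  (Quot.sound (r := fun p q : T3 => torusInv p = q) rfl).symm

lemma eqvGen_iff {x y : T3} : Relation.EqvGen (fun p q : T3 => torusInv p = q) x y →
    y = x ∨ y = torusInv x := by
  intro h
  induction h with
  | rel a b hab => exact Or.inr hab.symm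
  | refl a => exact Or.inl rfl
  | symm a b hab ih =>
    rcases ih with h1 | h1
    · exact Or.inl h1.symm
    · subst h1; exact Or.inr (torusInv_invol a).symm
  | trans a b c _ _ ih1 ih2 =>
    rcases ih1 with h1 | h1 <;> rcases ih2 with h2 | h2 <;> subst h2 <;> subst h1
    · exact Or.inl rfl
    · exact Or.inr rfl
    · exact Or.inr rfl
    · exact Or.inl (torusInv_invol a)

lemma qeq {x y : T3} : qm x = qm y ↔ y = x ∨ y = torusInv x := by
  constructor
  · intro h; exact eqvGen_iff (Quot.eq.mp h)
  · rintro (rfl | rfl)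
    · rfl
    · exact (qm_torusInv x).symm

lemma continuous_qm : Continuous qm := continuous_quot_mk

lemma qm_surjective : Function.Surjective qm := Quot.exists_rep

lemma preimage_image_qm (A : Set T3) : qm ⁻¹' (qm '' A) = A ∪ torusInv ⁻¹' A := by
  ext x
  simp only [Set.mem_preimage, Set.mem_image, Set.mem_union]
  constructor
  · rintro ⟨a, ha, hax⟩
    rcases qeq.mp hax with rfl | rfl
    · exact Or.inl ha
    · right; simpa [torusInv_invol a] using ha
  · rintro (hx | hx)
    · exact ⟨x, hx, rfl⟩
    · exact ⟨torusInv x, hx, qm_torusInv x⟩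

lemma isOpenMap_qm : IsOpenMap qm := by
  intro A hA
  rw [← isQuotientMap_quot_mk.isOpen_preimage]
  rw [show (Quot.mk fun p q : T3 => torusInv p = q) = qm from rfl, preimage_image_qm]
  exact hA.union (hA.preimage continuous_torusInv)

lemma isClosedMap_qm : IsClosedMap qm := by
  intro A hA
  have h2 : IsClosed (qm ⁻¹' (qm '' A)) := by
    rw [preimage_image_qm]; exact hA.union (hA.preimage continuous_torusInv)
  rw [← isQuotientMap_quot_mk.isClosed_preimage]
  exact h2

/-- the fixed point set of the involution -/
noncomputable def Fset : Set T3 := {p | torusInv p = p}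

lemma isClosed_Fset : IsClosed Fset :=
  isClosed_eq continuous_torusInv continuous_id

lemma one_mem_Fset : (1 : T3) ∈ Fset := by
  simp [Fset, torusInv, Prod.ext_iff]

/-- fibers over images of fixed points are singletons -/
lemma fiber_fixed {f x : T3} (hf : f ∈ Fset) (h : qm x = qm f) : x = f := by
  rcases qeq.mp h.symm with rfl | rfl
  · rfl
  · exact hf


lemma Fset_def {p : T3} : p ∈ Fset ↔ torusInv p = p := Iff.rfl

/-- Local sections of `qm` near non-fixed points. -/
lemma local_section {z : T3} (hz : z ∉ Fset) :
    ∃ V : Set XT, IsOpen V ∧ qm z ∈ V ∧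
      ∃ s : XT → T3, ContinuousOn s V ∧ ∀ y ∈ V, qm (s y) = y := by
  have hne : torusInv z ≠ z := fun h => hz (Fset_def.mpr h)
  obtain ⟨W₀, W₁, hW₀, hW₁, hzW₀, hzW₁, hdisj⟩ := t2_separation hne.symm
  set W : Set T3 := W₀ ∩ torusInv ⁻¹' W₁ with hW
  have hWopen : IsOpen W := hW₀.inter (hW₁.preimage continuous_torusInv)
  have hzW : z ∈ W := ⟨hzW₀, hzW₁⟩
  have hkey : ∀ w ∈ W, torusInv w ∉ W := by
    rintro w ⟨hw0, hw1⟩ ⟨hiw0, _⟩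
    exact hdisj.ne_of_mem hiw0 hw1 rfl
  classical
  set s : XT → T3 := fun y => if h : ∃ x ∈ W, qm x = y then h.choose else 1 with hs
  have hsW : ∀ y, (∃ x ∈ W, qm x = y) → s y ∈ W ∧ qm (s y) = y := by
    intro y h
    simp only [hs, dif_pos h]
    exact ⟨h.choose_spec.1, h.choose_spec.2⟩
  have hsqm : ∀ x ∈ W, s (qm x) = x := by
    intro x hx
    obtain ⟨hmem, hqm⟩ := hsW (qm x) ⟨x, hx, rfl⟩
    rcases qeq.mp hqm with h | h
    · exact h.symm
    · exfalso
      apply hkey x hx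
      have h2 : torusInv x = s (qm x) := (congrArg torusInv h).trans (torusInv_invol _)
      rwa [h2]
  refine ⟨qm '' W, isOpenMap_qm W hWopen, ⟨z, hzW, rfl⟩, s, ?_, ?_⟩
  · rw [continuousOn_iff]
    rintro y ⟨x, hxW, rfl⟩ O hO hsO
    refine ⟨qm '' (O ∩ W), isOpenMap_qm _ (hO.inter hWopen), ?_, ?_⟩
    · exact ⟨x, ⟨by rwa [hsqm x hxW] at hsO, hxW⟩, rfl⟩
    · rintro y' ⟨⟨x', ⟨hx'O, hx'W⟩, rfl⟩, -⟩
      simpa [Set.mem_preimage, hsqm x' hx'W] using hx'O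
  · rintro y ⟨x, hxW, rfl⟩
    exact (hsW _ ⟨x, hxW, rfl⟩).2

/-- Uniqueness of lifts through `qm` on preconnected sets, away from fixed points. -/
lemma lift_unique {s : Set ℝ} (hs : _root_.IsPreconnected s) {g₁ g₂ : ℝ → T3}
    (h₁ : ContinuousOn g₁ s) (h₂ : ContinuousOn g₂ s)
    (hq : ∀ t ∈ s, qm (g₁ t) = qm (g₂ t)) (hF : ∀ t ∈ s, g₁ t ∉ Fset)
    {t₀ : ℝ} (ht₀ : t₀ ∈ s) (he : g₁ t₀ = g₂ t₀) : Set.EqOn g₁ g₂ s := by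
  haveI : PreconnectedSpace s := Subtype.preconnectedSpace hs
  set f₁ : s → T3 := s.restrict g₁ with hf₁
  set f₂ : s → T3 := s.restrict g₂ with hf₂
  have hc₁ : Continuous f₁ := continuousOn_iff_continuous_restrict.mp h₁
  have hc₂ : Continuous f₂ := continuousOn_iff_continuous_restrict.mp h₂
  set D : Set s := {x | f₁ x = f₂ x} with hD
  set D' : Set s := {x | f₂ x = torusInv (f₁ x)} with hD'
  have hDc : IsClosed D := isClosed_eq hc₁ hc₂
  have hD'c : IsClosed D' := isClosed_eq hc₂ (continuous_torusInv.comp hc₁)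
  have hcover : ∀ x, x ∈ D ∪ D' := by
    intro x
    rcases qeq.mp (hq x x.2) with h | h
    · exact Or.inl h.symm
    · exact Or.inr h
  have hdisj : ∀ x, x ∈ D → x ∈ D' → False := by
    intro x hx hx'
    exact hF x x.2 (Fset_def.mpr (hx.trans hx').symm)
  have hopen : IsOpen D := by
    have : D = D'ᶜ := by
      ext x; constructor
      · intro hx hx'; exact hdisj x hx hx'
      · intro hx; rcases hcover x with h | h
        · exact h
        · exact absurd h hx
    rw [this]; exact hD'c.isOpen_compl
  have : D = univ := by
    rcases isClopen_iff.mp ⟨hDc, hopen⟩ with h | h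
    · exact absurd (h ▸ (show (⟨t₀, ht₀⟩ : s) ∈ D from he)) (by simp)
    · exact h
  intro t ht
  exact show (⟨t, ht⟩ : s) ∈ D from this ▸ mem_univ _

/-- Existence of lifts on compact intervals, anchored at the left endpoint. -/
lemma lift_exists_left {u v : ℝ} (huv : u ≤ v) {g : ℝ → XT}
    (hg : ContinuousOn g (Icc u v)) (hB : ∀ t ∈ Icc u v, g t ∉ qm '' Fset)
    {z : T3} (hz : qm z = g u) :
    ∃ lam : ℝ → T3, ContinuousOn lam (Icc u v) ∧
      (∀ t ∈ Icc u v, qm (lam t) = g t) ∧ lam u = z := by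
  classical
  set S : Set ℝ := {t | t ∈ Icc u v ∧ ∃ lam : ℝ → T3, ContinuousOn lam (Icc u t) ∧
      (∀ r ∈ Icc u t, qm (lam r) = g r) ∧ lam u = z} with hS
  have huS : u ∈ S := by
    refine ⟨⟨le_refl u, huv⟩, fun _ => z, continuousOn_const, ?_, rfl⟩
    intro r hr
    have : r = u := le_antisymm hr.2 hr.1
    rw [this]; exact hz
  have hSne : S.Nonempty := ⟨u, huS⟩
  have hSbdd : BddAbove S := ⟨v, fun t ht => ht.1.2⟩
  set T := sSup S with hT
  have hTmem : T ∈ Icc u v := ⟨le_csSup hSbdd huS, csSup_le hSne (fun t ht => ht.1.2)⟩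
  -- find a local section around a preimage of g T
  obtain ⟨x₀, hx₀⟩ := qm_surjective (g T)
  have hx₀F : x₀ ∉ Fset := fun h => hB T hTmem ⟨x₀, h, hx₀⟩
  obtain ⟨V, hVopen, hVmem, sct, hsctC, hsct⟩ := local_section hx₀F
  rw [hx₀] at hVmem
  have hgT : ContinuousWithinAt g (Icc u v) T := hg T hTmem
  have hVnhds : g ⁻¹' V ∈ nhdsWithin T (Icc u v) := hgT (hVopen.mem_nhds hVmem)
  obtain ⟨ε, hε, hball⟩ := Metric.mem_nhdsWithin_iff.mp hVnhds
  -- choose t₁ ∈ S with T - ε < t₁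
  have : ∃ t₁ ∈ S, T - ε < t₁ := by
    rcases lt_or_ge (T - ε) u with h | h
    · exact ⟨u, huS, h⟩
    · obtain ⟨t₁, ht₁S, ht₁⟩ := exists_lt_of_lt_csSup hSne (by linarith : T - ε < T)
      exact ⟨t₁, ht₁S, ht₁⟩
  obtain ⟨t₁, ht₁S, ht₁⟩ := this
  have ht₁T : t₁ ≤ T := le_csSup hSbdd ht₁S
  obtain ⟨lam₁, hlam₁C, hlam₁q, hlam₁u⟩ := ht₁S.2
  set T' := min (T + ε/2) v with hT'
  have hT'v : T' ≤ v := min_le_right _ _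
  have hTT' : T ≤ T' := le_min (by linarith) hTmem.2
  have ht₁T' : t₁ ≤ T' := le_trans ht₁T hTT'
  have hIccV : ∀ r ∈ Icc t₁ T', g r ∈ V := by
    intro r hr
    apply hball
    have h1 : r ≤ T + ε/2 := le_trans hr.2 (min_le_left _ _)
    constructor
    · rw [Metric.mem_ball, Real.dist_eq, abs_lt]
      constructor
      · linarith [hr.1]
      · linarith
    · exact ⟨le_trans ht₁S.1.1 hr.1, le_trans hr.2 hT'v⟩
  -- toggle the section so that it matches lam₁ at t₁
  have ht₁V : g t₁ ∈ V := hIccV t₁ ⟨le_refl _, ht₁T'⟩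
  have ht₁Icc : t₁ ∈ Icc u v := ht₁S.1
  have hq₁ : qm (lam₁ t₁) = g t₁ := hlam₁q t₁ ⟨ht₁Icc.1, le_refl _⟩
  have hq₂ : qm (sct (g t₁)) = g t₁ := hsct _ ht₁V
  have : lam₁ t₁ = sct (g t₁) ∨ lam₁ t₁ = torusInv (sct (g t₁)) := by
    rcases qeq.mp (hq₂.trans hq₁.symm) with h | h
    · exact Or.inl h
    · exact Or.inr h
  obtain ⟨s', hs'C, hs'q, hs't₁⟩ :
      ∃ s' : XT → T3, ContinuousOn s' V ∧ (∀ y ∈ V, qm (s' y) = y) ∧ s' (g t₁) = lam₁ t₁ := by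
    rcases this with h | h
    · exact ⟨sct, hsctC, hsct, h.symm⟩
    · refine ⟨torusInv ∘ sct, continuous_torusInv.comp_continuousOn hsctC, ?_, h.symm⟩
      intro y hy
      rw [Function.comp_apply, qm_torusInv]
      exact hsct y hy
  -- the glued lift on [u, T']
  set lam₂ : ℝ → T3 := fun r =>
      lam₁ (min r t₁) * (s' (g t₁))⁻¹ * s' (g (min (max r t₁) T')) with hlam₂
  have hmapsTo₁ : ∀ r ∈ Icc u T', min r t₁ ∈ Icc u t₁ := by
    intro r hr
    exact ⟨le_min hr.1 ht₁Icc.1, min_le_right _ _⟩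
  have hmapsTo₂ : ∀ r ∈ Icc u T', min (max r t₁) T' ∈ Icc t₁ T' := by
    intro r hr
    exact ⟨le_min (le_max_right _ _) ht₁T', min_le_right _ _⟩
  have hlam₂C : ContinuousOn lam₂ (Icc u T') := by
    apply ContinuousOn.mul
    apply ContinuousOn.mul
    · exact hlam₁C.comp (continuous_id.min continuous_const).continuousOn hmapsTo₁
    · exact continuousOn_const
    · apply hs'C.comp
      · apply hg.comp ((continuous_id.max continuous_const).min continuous_const).continuousOn
        intro r hr
        have := hmapsTo₂ r hr
        exact ⟨le_trans ht₁Icc.1 this.1, le_trans this.2 hT'v⟩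
      · intro r hr
        exact hIccV _ (hmapsTo₂ r hr)
  have hlam₂vals : ∀ r ∈ Icc u T', lam₂ r = if r ≤ t₁ then lam₁ r else s' (g r) := by
    intro r hr
    rcases le_total r t₁ with h | h
    · rw [if_pos h]
      have h1 : min r t₁ = r := min_eq_left h
      have h2 : max r t₁ = t₁ := max_eq_right h
      rw [hlam₂]
      simp only [h1, h2, min_eq_left ht₁T']
      rw [hs't₁]
      group
    · rcases eq_or_lt_of_le h with rfl | hlt
      · rw [if_pos (le_refl t₁)]
        rw [hlam₂]
        simp only [min_self, max_self, min_eq_left ht₁T']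
        rw [hs't₁]
        group
      · rw [if_neg (not_le.mpr hlt)]
        have h1 : min r t₁ = t₁ := min_eq_right h
        have h2 : max r t₁ = r := max_eq_left h
        rw [hlam₂]
        simp only [h1, h2, min_eq_left hr.2]
        rw [← hs't₁]
        group
  have hlam₂q : ∀ r ∈ Icc u T', qm (lam₂ r) = g r := by
    intro r hr
    rw [hlam₂vals r hr]
    split_ifs with h
    · exact hlam₁q r ⟨hr.1, h⟩
    · push_neg at h
      exact hs'q _ (hIccV r ⟨le_of_lt h, hr.2⟩)
  have hlam₂u : lam₂ u = z := by
    rw [hlam₂vals u ⟨le_refl u, le_trans ht₁Icc.1 ht₁T'⟩, if_pos ht₁Icc.1]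
    exact hlam₁u
  have hT'S : T' ∈ S := ⟨⟨le_trans ht₁Icc.1 ht₁T', hT'v⟩, lam₂, hlam₂C, hlam₂q, hlam₂u⟩
  have hTv : T = v := by
    by_contra hne
    have hTv : T < v := lt_of_le_of_ne hTmem.2 hne
    have : T' > T := lt_min (by linarith) hTv
    exact absurd (le_csSup hSbdd hT'S) (not_le.mpr this)
  have hvS : v ∈ S := by
    have : T' = v := by rw [hT', hTv]; exact min_eq_right (by linarith)
    rwa [this] at hT'S
  exact hvS.2

/-- the branch locus in the quotient -/
noncomputable def Bqf : Set XT := qm '' Fset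

lemma isClosed_Bqf : IsClosed Bqf := isClosedMap_qm _ isClosed_Fset

/-- Two-sided lift existence, anchored at any point of the interval. -/
lemma lift_exists_two {a e b : ℝ} (hae : a ≤ e) (heb : e ≤ b) {g : ℝ → XT}
    (hg : ContinuousOn g (Icc a b)) (hB : ∀ t ∈ Icc a b, g t ∉ Bqf)
    {z : T3} (hz : qm z = g e) :
    ∃ lam : ℝ → T3, ContinuousOn lam (Icc a b) ∧
      (∀ t ∈ Icc a b, qm (lam t) = g t) ∧ lam e = z := by
  have hsub_r : Icc e b ⊆ Icc a b := Icc_subset_Icc hae le_rfl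
  obtain ⟨lamr, hlamrC, hlamrq, hlamre⟩ :=
    lift_exists_left heb (hg.mono hsub_r) (fun t ht => hB t (hsub_r ht)) hz
  -- reflected left part
  set gl : ℝ → XT := fun r => g (a + e - r) with hgl
  have hrefl : ∀ r ∈ Icc a e, a + e - r ∈ Icc a e := by
    intro r hr; constructor <;> [linarith [hr.2]; linarith [hr.1]]
  have hsub_l : Icc a e ⊆ Icc a b := Icc_subset_Icc le_rfl heb
  have hglC : ContinuousOn gl (Icc a e) := by
    apply (hg.mono hsub_l).comp (by fun_prop : Continuous fun r : ℝ => a + e - r).continuousOn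
    intro r hr; exact hrefl r hr
  obtain ⟨mu, hmuC, hmuq, hmua⟩ :=
    lift_exists_left hae hglC
      (fun t ht => by
        have := hrefl t ht
        exact hB _ (hsub_l this))
      (by simpa [hgl] using hz)
  set laml : ℝ → T3 := fun r => mu (a + e - r) with hlaml
  have hlamlC : ContinuousOn laml (Icc a e) := by
    apply hmuC.comp (by fun_prop : Continuous fun r : ℝ => a + e - r).continuousOn
    intro r hr; exact hrefl r hr
  have hlamlq : ∀ r ∈ Icc a e, qm (laml r) = g r := by
    intro r hr
    have := hmuq (a + e - r) (hrefl r hr)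
    simpa [hlaml, hgl] using this
  have hlamle : laml e = z := by simp [hlaml, hmua]
  -- glue
  set lam : ℝ → T3 := fun r => laml (min r e) * z⁻¹ * lamr (max r e) with hlam
  have hvals : ∀ r, lam r = if r ≤ e then laml r else lamr r := by
    intro r
    rcases le_total r e with h | h
    · rw [if_pos h, hlam]
      simp only [min_eq_left h, max_eq_right h, hlamre]
      group
    · rcases eq_or_lt_of_le h with rfl | hlt
      · rw [if_pos le_rfl]
        simp only [hlam, min_self, max_self, hlamre, hlamle]
        group
      · rw [if_neg (not_le.mpr hlt), hlam]
        simp only [min_eq_right h, max_eq_left h, hlamle]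
        group
  refine ⟨lam, ?_, ?_, ?_⟩
  · apply ContinuousOn.mul
    apply ContinuousOn.mul
    · apply hlamlC.comp (continuous_id.min continuous_const).continuousOn
      intro r hr; exact ⟨le_min hr.1 hae, min_le_right _ _⟩
    · exact continuousOn_const
    · apply hlamrC.comp (continuous_id.max continuous_const).continuousOn
      intro r hr; exact ⟨le_max_right _ _, max_le hr.2 heb⟩
  · intro t ht
    rw [hvals t]
    split_ifs with h
    · exact hlamlq t ⟨ht.1, h⟩
    · exact hlamrq t ⟨le_of_lt (not_le.mp h), ht.2⟩
  · rw [hvals e, if_pos le_rfl, hlamle]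


/-- The global lift of a loop based at the image of the fixed point `1`. -/
theorem global_lift {g : ℝ → XT} (hgc : Continuous g)
    (hg0 : ∀ t, t ≤ 0 → g t = qm 1) (hg1 : ∀ t, 1 ≤ t → g t = qm 1) :
    ∃ gt : ℝ → T3, Continuous gt ∧ ∀ t, qm (gt t) = g t := by
  classical
  set Z : Set ℝ := g ⁻¹' Bqf with hZdef
  have hZc : IsClosed Z := isClosed_Bqf.preimage hgc
  have hone : qm (1 : T3) ∈ Bqf := ⟨1, one_mem_Fset, rfl⟩
  have hZ0 : ∀ t, t ≤ 0 → t ∈ Z := fun t ht => by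
    simp only [hZdef, mem_preimage, hg0 t ht]; exact hone
  have hZ1 : ∀ t, 1 ≤ t → t ∈ Z := fun t ht => by
    simp only [hZdef, mem_preimage, hg1 t ht]; exact hone
  have hApos : ∀ s, s ∉ Z → (0:ℝ) < s := fun s hs => by
    by_contra h; exact hs (hZ0 s (le_of_not_gt h))
  have hBlt1 : ∀ s, s ∉ Z → s < 1 := fun s hs => by
    by_contra h; exact hs (hZ1 s (le_of_not_gt h))
  set A : ℝ → ℝ := fun t => sSup (Z ∩ Iic t) with hA
  set B : ℝ → ℝ := fun t => sInf (Z ∩ Ici t) with hB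
  have hAfacts : ∀ t, t ∉ Z → A t ∈ Z ∧ A t < t := by
    intro t ht
    have hne : (Z ∩ Iic t).Nonempty := ⟨0, hZ0 0 le_rfl, (hApos t ht).le⟩
    have hbdd : BddAbove (Z ∩ Iic t) := ⟨t, fun x hx => hx.2⟩
    have hmem : A t ∈ Z ∩ Iic t := (hZc.inter isClosed_Iic).csSup_mem hne hbdd
    exact ⟨hmem.1, lt_of_le_of_ne hmem.2 (fun h => ht (h ▸ hmem.1))⟩
  have hBfacts : ∀ t, t ∉ Z → B t ∈ Z ∧ t < B t := by
    intro t ht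
    have hne : (Z ∩ Ici t).Nonempty := ⟨1, hZ1 1 le_rfl, (hBlt1 t ht).le⟩
    have hbdd : BddBelow (Z ∩ Ici t) := ⟨t, fun x hx => hx.2⟩
    have hmem : B t ∈ Z ∩ Ici t := (hZc.inter isClosed_Ici).csInf_mem hne hbdd
    exact ⟨hmem.1, lt_of_le_of_ne hmem.2 (fun h => ht (by rw [h]; exact hmem.1))⟩
  have hIooZ : ∀ t, t ∉ Z → ∀ s ∈ Ioo (A t) (B t), s ∉ Z := by
    intro t ht s hs hsZ
    rcases le_total s t with h | h
    · have : s ≤ A t := le_csSup ⟨t, fun x hx => hx.2⟩ ⟨hsZ, h⟩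
      exact absurd hs.1 (not_lt.mpr this)
    · have : B t ≤ s := csInf_le ⟨t, fun x hx => hx.2⟩ ⟨hsZ, h⟩
      exact absurd hs.2 (not_lt.mpr this)
  have hcomp : ∀ t, t ∉ Z → ∀ s ∈ Ioo (A t) (B t), A s = A t ∧ B s = B t := by
    intro t ht s hs
    have hsZ : s ∉ Z := hIooZ t ht s hs
    have hAneS : (Z ∩ Iic s).Nonempty := ⟨0, hZ0 0 le_rfl, (hApos s hsZ).le⟩
    have hBneS : (Z ∩ Ici s).Nonempty := ⟨1, hZ1 1 le_rfl, (hBlt1 s hsZ).le⟩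
    constructor
    · apply le_antisymm
      · apply csSup_le hAneS
        intro x hx
        by_contra hc
        push_neg at hc
        exact hIooZ t ht x ⟨hc, lt_of_le_of_lt hx.2 hs.2⟩ hx.1
      · exact le_csSup ⟨s, fun x hx => hx.2⟩ ⟨(hAfacts t ht).1, hs.1.le⟩
    · apply le_antisymm
      · exact csInf_le ⟨s, fun x hx => hx.2⟩ ⟨(hBfacts t ht).1, hs.2.le⟩
      · apply le_csInf hBneS
        intro x hx
        by_contra hc
        push_neg at hc
        exact hIooZ t ht x ⟨lt_of_lt_of_le hs.1 hx.2, hc⟩ hx.1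
  set M : ℝ → ℝ := fun t => (A t + B t)/2 with hM
  have hMIoo : ∀ t, t ∉ Z → M t ∈ Ioo (A t) (B t) := by
    intro t ht
    have h1 := (hAfacts t ht).2
    have h2 := (hBfacts t ht).2
    constructor <;> simp only [hM] <;> linarith
  have hsubIoo : ∀ t, t ∉ Z → Icc (min t (M t)) (max t (M t)) ⊆ Ioo (A t) (B t) := by
    intro t ht r hr
    have h1 := (hAfacts t ht).2
    have h2 := (hBfacts t ht).2
    have h3 := hMIoo t ht
    exact ⟨lt_of_lt_of_le (lt_min h1 h3.1) hr.1, lt_of_le_of_lt hr.2 (max_lt h2 h3.2)⟩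
  have hlift : ∀ t, t ∉ Z → ∃ lam : ℝ → T3,
      ContinuousOn lam (Icc (min t (M t)) (max t (M t))) ∧
      (∀ r ∈ Icc (min t (M t)) (max t (M t)), qm (lam r) = g r) ∧
      lam (M t) = Quot.out (g (M t)) := by
    intro t ht
    apply lift_exists_two (min_le_right t (M t)) (le_max_right t (M t)) hgc.continuousOn
    · intro r hr
      exact hIooZ t ht r (hsubIoo t ht hr)
    · exact Quot.out_eq _
  set gt : ℝ → T3 := fun t =>
    if h : t ∈ Z then Quot.out (g t) else Classical.choose (hlift t h) t with hgt
  have hgtZ : ∀ t ∈ Z, gt t = Quot.out (g t) := fun t ht => dif_pos ht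
  have hgtNZ : ∀ t (h : t ∉ Z), gt t = Classical.choose (hlift t h) t :=
    fun t h => dif_neg h
  have hgtq : ∀ t, qm (gt t) = g t := by
    intro t
    by_cases h : t ∈ Z
    · rw [hgtZ t h]; exact Quot.out_eq _
    · rw [hgtNZ t h]
      exact (Classical.choose_spec (hlift t h)).2.1 t
        ⟨min_le_left _ _, le_max_left _ _⟩
  have hliftF : ∀ (lam : ℝ → T3) (r : ℝ), r ∉ Z → qm (lam r) = g r → lam r ∉ Fset := by
    intro lam r hr hq hF
    exact hr (show g r ∈ Bqf from hq ▸ ⟨lam r, hF, rfl⟩)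
  -- coherence of the choices
  have hcoh : ∀ t, ∀ (ht : t ∉ Z), ∀ (lam : ℝ → T3) (al be : ℝ),
      Icc al be ⊆ Ioo (A t) (B t) → ContinuousOn lam (Icc al be) →
      (∀ r ∈ Icc al be, qm (lam r) = g r) → lam (M t) = Quot.out (g (M t)) →
      t ∈ Icc al be → M t ∈ Icc al be → lam t = gt t := by
    intro t ht lam al be hsub hlamC hlamq hlamM htmem hMmem
    set J : Set ℝ := Icc (min t (M t)) (max t (M t)) with hJ
    have hJsub : J ⊆ Icc al be :=
      Icc_subset_Icc (le_min htmem.1 hMmem.1) (max_le htmem.2 hMmem.2)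
    obtain ⟨hC, hq, hanchor⟩ := Classical.choose_spec (hlift t ht)
    have heq : Set.EqOn lam (Classical.choose (hlift t ht)) J := by
      apply lift_unique isPreconnected_Icc (hlamC.mono hJsub) hC
      · intro r hr
        rw [hlamq r (hJsub hr), hq r hr]
      · intro r hr
        exact hliftF lam r (hIooZ t ht r (hsubIoo t ht hr)) (hlamq r (hJsub hr))
      · exact (⟨min_le_right _ _, le_max_right _ _⟩ : M t ∈ J)
      · rw [hlamM, hanchor]
    rw [hgtNZ t ht]
    exact heq ⟨min_le_left _ _, le_max_left _ _⟩
  -- continuity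
  have hcont : Continuous gt := by
    rw [continuous_iff_continuousAt]
    intro t₀
    by_cases ht₀ : t₀ ∈ Z
    · -- continuity at branch times
      rw [ContinuousAt]
      have hf : gt t₀ = Quot.out (g t₀) := hgtZ t₀ ht₀
      rw [tendsto_nhds]
      intro U hUopen hUmem
      have hfF : gt t₀ ∈ Fset := by
        obtain ⟨f₀, hf₀, hq₀⟩ := ht₀
        have : gt t₀ = f₀ := fiber_fixed hf₀ (by rw [hgtq t₀, ← hq₀])
        rw [this]; exact hf₀
      set U' : Set T3 := U ∩ torusInv ⁻¹' U with hU'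
      have hU'open : IsOpen U' := hUopen.inter (hUopen.preimage continuous_torusInv)
      have hU'mem : gt t₀ ∈ U' := ⟨hUmem, by
        rw [mem_preimage, Fset_def.mp hfF]; exact hUmem⟩
      set W : Set XT := (qm '' U'ᶜ)ᶜ with hW
      have hWopen : IsOpen W := (isClosedMap_qm _ hU'open.isClosed_compl).isOpen_compl
      have hWmem : g t₀ ∈ W := by
        rintro ⟨c, hc, hqc⟩
        apply hc
        have : c = gt t₀ := fiber_fixed hfF (by rw [hgtq t₀, ← hqc])
        rw [this]; exact hU'mem
      have hpre : g ⁻¹' W ∈ nhds t₀ :=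
        hgc.continuousAt (hWopen.mem_nhds hWmem)
      filter_upwards [hpre] with s hsW
      by_contra hsU
      apply hsW
      exact ⟨gt s, fun h => hsU h.1, hgtq s⟩
    · -- continuity in the free part
      have h1 := (hAfacts t₀ ht₀).2
      have h2 := (hBfacts t₀ ht₀).2
      have h3 := hMIoo t₀ ht₀
      set lo := min t₀ (M t₀) with hlo
      set hi := max t₀ (M t₀) with hhi
      set al := (A t₀ + lo)/2 with hal
      set be := (hi + B t₀)/2 with hbe
      have hAlo : A t₀ < lo := lt_min h1 h3.1
      have hhiB : hi < B t₀ := max_lt h2 h3.2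
      have hloihi : lo ≤ hi := min_le_max
      have hala : A t₀ < al := by simp only [hal]; linarith
      have hallo : al < lo := by simp only [hal]; linarith
      have hhibe : hi < be := by simp only [hbe]; linarith
      have hbeB : be < B t₀ := by simp only [hbe]; linarith
      have hsub : Icc al be ⊆ Ioo (A t₀) (B t₀) := by
        intro r hr
        exact ⟨lt_of_lt_of_le hala hr.1, lt_of_le_of_lt hr.2 hbeB⟩
      have halM : al ≤ M t₀ := le_trans hallo.le (min_le_right _ _)
      have hMbe : M t₀ ≤ be := le_trans (le_max_right _ _) hhibe.le
      obtain ⟨lam, hlamC, hlamq, hlamM⟩ :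
          ∃ lam : ℝ → T3, ContinuousOn lam (Icc al be) ∧
            (∀ r ∈ Icc al be, qm (lam r) = g r) ∧
            lam (M t₀) = Quot.out (g (M t₀)) := by
        apply lift_exists_two halM hMbe hgc.continuousOn
        · intro r hr
          exact hIooZ t₀ ht₀ r (hsub hr)
        · exact Quot.out_eq _
      have hEq : ∀ s ∈ Ioo al be, gt s = lam s := by
        intro s hs
        have hsIoo : s ∈ Ioo (A t₀) (B t₀) := ⟨lt_trans hala hs.1, lt_trans hs.2 hbeB⟩
        have hsZ : s ∉ Z := hIooZ t₀ ht₀ s hsIoo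
        obtain ⟨hAs, hBs⟩ := hcomp t₀ ht₀ s hsIoo
        have hMs : M s = M t₀ := by simp only [hM, hAs, hBs]
        refine (hcoh s hsZ lam al be ?_ hlamC hlamq ?_ ⟨hs.1.le, hs.2.le⟩ ?_).symm
        · rw [hAs, hBs]; exact hsub
        · rw [hMs]; exact hlamM
        · rw [hMs]; exact ⟨halM, hMbe⟩
      have htIoo : t₀ ∈ Ioo al be :=
        ⟨lt_of_lt_of_le hallo (min_le_left _ _), lt_of_le_of_lt (le_max_left _ _) hhibe⟩
      have hlamAt : ContinuousAt lam t₀ :=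
        hlamC.continuousAt (Icc_mem_nhds htIoo.1 htIoo.2)
      apply hlamAt.congr
      filter_upwards [Ioo_mem_nhds htIoo.1 htIoo.2] with s hs
      exact (hEq s hs).symm
  exact ⟨gt, hcont, hgtq⟩

/-- Lift a continuous circle-valued function on `[0,1]` through `Circle.exp`. -/
lemma circle_lift {f : ℝ → Circle} (hf : Continuous f) (hf0 : f 0 = 1) :
    ∃ h : ℝ → ℝ, Continuous h ∧ h 0 = 0 ∧ ∀ t ∈ Icc (0:ℝ) 1, Circle.exp (h t) = f t := by
  classical
  have huc : UniformContinuousOn f (Icc 0 1) :=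
    isCompact_Icc.uniformContinuousOn_of_continuous hf.continuousOn
  obtain ⟨δ, hδ, hd⟩ := Metric.uniformContinuousOn_iff.mp huc 1 one_pos
  obtain ⟨n, hn⟩ := exists_nat_one_div_lt hδ
  set N : ℝ := (n : ℝ) + 1 with hN
  have hNpos : (0:ℝ) < N := by positivity
  set c : ℕ → ℝ → ℝ := fun j t => min (max t ((j:ℝ)/N)) (((j:ℝ)+1)/N) with hc
  have hmono : ∀ j : ℕ, (j:ℝ)/N ≤ ((j:ℝ)+1)/N :=
    fun j => (div_le_div_iff_of_pos_right hNpos).mpr (by linarith)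
  have hcIcc : ∀ (j : ℕ) (t : ℝ), c j t ∈ Icc ((j:ℝ)/N) (((j:ℝ)+1)/N) :=
    fun j t => ⟨le_min (le_max_right _ _) (hmono j), min_le_right _ _⟩
  have hjIcc : ∀ j : ℕ, j < n + 1 → ((j:ℝ)/N) ∈ Icc (0:ℝ) 1 ∧ ((j:ℝ)+1)/N ≤ 1 := by
    intro j hj
    have hj' : (j:ℝ) + 1 ≤ N := by
      rw [hN]
      have : (j:ℝ) ≤ n := by exact_mod_cast Nat.lt_succ_iff.mp hj
      linarith
    refine ⟨⟨by positivity, ?_⟩, ?_⟩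
    · rw [div_le_one hNpos]; linarith
    · rw [div_le_one hNpos]; linarith
  have hcIcc01 : ∀ j : ℕ, j < n + 1 → ∀ t, c j t ∈ Icc (0:ℝ) 1 := by
    intro j hj t
    have h1 := hcIcc j t
    have h2 := hjIcc j hj
    exact ⟨le_trans h2.1.1 h1.1, le_trans h1.2 h2.2⟩
  have hdist : ∀ j : ℕ, j < n + 1 → ∀ t, dist (f (c j t)) (f ((j:ℝ)/N)) < 1 := by
    intro j hj t
    apply hd _ (hcIcc01 j hj t) _ (hjIcc j hj).1
    have h1 := hcIcc j t
    rw [Real.dist_eq, abs_lt]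
    have h2 : ((j:ℝ)+1)/N - (j:ℝ)/N = 1/N := by ring
    constructor
    · have := h1.1; linarith
    · have h3 := h1.2
      have h4 : c j t - (j:ℝ)/N ≤ 1/N := by linarith
      linarith [hn]
  set u : ℕ → ℝ → Circle := fun j t => f (c j t) / f ((j:ℝ)/N) with hu
  have hure : ∀ j : ℕ, j < n + 1 → ∀ t, 0 < ((u j t : ℂ)).re := by
    intro j hj t
    have h1 : ‖(u j t : ℂ) - 1‖ < 1 := by
      have he : ((u j t : ℂ) - 1) = ((f (c j t) : ℂ) - f ((j:ℝ)/N)) / (f ((j:ℝ)/N) : ℂ) := by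
        rw [hu]
        simp only [Circle.coe_div]
        field_simp
      rw [he, norm_div, Circle.norm_coe, div_one]
      have := hdist j hj t
      rw [← dist_eq_norm]; exact this
    have h2 : Complex.normSq ((u j t : ℂ) - 1) < 1 := by
      rw [← Complex.sq_norm]
      nlinarith [norm_nonneg ((u j t : ℂ) - 1)]
    have h3 : Complex.normSq (u j t : ℂ) = 1 := Circle.normSq_coe _
    have h4 : Complex.normSq ((u j t : ℂ) - 1) =
        Complex.normSq (u j t : ℂ) - 2 * ((u j t : ℂ)).re + 1 := by
      rw [Complex.normSq_apply, Complex.normSq_apply, Complex.sub_re, Complex.sub_im,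
        Complex.one_re, Complex.one_im]
      ring
    rw [h4, h3] at h2
    linarith
  set h : ℝ → ℝ := fun t => ∑ j ∈ Finset.range (n+1), Complex.arg (u j t) with hh
  have hccont : ∀ j : ℕ, Continuous fun t => c j t := by
    intro j
    simp only [hc]
    exact (continuous_id.max continuous_const).min continuous_const
  have hucont : ∀ j : ℕ, Continuous fun t => (u j t : ℂ) := by
    intro j
    simp only [hu, Circle.coe_div]
    have : Continuous fun t => (f (c j t) : ℂ) :=
      continuous_subtype_val.comp (hf.comp (hccont j))
    exact this.div_const _
  have hhcont : Continuous h := by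
    apply continuous_finset_sum
    intro j hj
    rw [continuous_iff_continuousAt]
    intro t
    exact ContinuousAt.comp (g := Complex.arg) (f := fun t => (u j t : ℂ))
      (Complex.continuousAt_arg (Complex.mem_slitPlane_iff.mpr
        (Or.inl (hure j (Finset.mem_range.mp hj) t)))) ((hucont j).continuousAt)
  have hc0 : ∀ j : ℕ, c j 0 = (j:ℝ)/N := by
    intro j
    simp only [hc]
    rw [max_eq_right (by positivity), min_eq_left (hmono j)]
  have hh0 : h 0 = 0 := by
    rw [hh]
    apply Finset.sum_eq_zero
    intro j hj
    rw [hu]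
    simp only [hc0 j]
    rw [div_self']
    simp [Complex.arg_one]
  -- the telescoping product identity
  have hprod : ∀ t ∈ Icc (0:ℝ) 1, ∀ k, k ≤ n + 1 →
      (∏ j ∈ Finset.range k, u j t) = f (min (max t 0) ((k:ℝ)/N)) / f 0 := by
    intro t ht k hk
    induction k with
    | zero =>
      simp only [Finset.range_zero, Finset.prod_empty, Nat.cast_zero, zero_div]
      rw [min_eq_right (le_max_right _ _), div_self']
    | succ k ih =>
      have hk' : k ≤ n + 1 := Nat.le_of_succ_le hk
      rw [Finset.prod_range_succ, ih hk']
      have hkk1 : (((k+1:ℕ)):ℝ)/N = ((k:ℝ)+1)/N := by push_cast; ring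
      rcases le_total t ((k:ℝ)/N) with hle | hle
      · have h1 : c k t = (k:ℝ)/N := by
          simp only [hc]
          rw [max_eq_right hle, min_eq_left (hmono k)]
        have h2 : max t 0 ≤ (k:ℝ)/N := max_le hle (by positivity)
        have h3 : min (max t 0) ((k:ℝ)/N) = max t 0 := min_eq_left h2
        have h4 : min (max t 0) ((((k+1:ℕ)):ℝ)/N) = max t 0 := by
          rw [hkk1]
          exact min_eq_left (le_trans h2 (hmono k))
        rw [hu]
        simp only [h1]
        rw [div_self', mul_one, h3, h4]
      · have h0t : (0:ℝ) ≤ t := le_trans (by positivity) hle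
        have h1 : c k t = min t (((k:ℝ)+1)/N) := by
          simp only [hc]
          rw [max_eq_left hle]
        have h2 : min (max t 0) ((k:ℝ)/N) = (k:ℝ)/N :=
          min_eq_right (le_trans hle (le_max_left _ _))
        have h3 : min (max t 0) ((((k+1:ℕ)):ℝ)/N) = min t (((k:ℝ)+1)/N) := by
          rw [max_eq_left h0t, hkk1]
        rw [hu]
        simp only [h1]
        rw [h2, h3]
        apply Circle.coe_injective
        simp only [Circle.coe_div, Circle.coe_mul]
        field_simp
  -- exp of the sum
  refine ⟨h, hhcont, hh0, ?_⟩
  intro t ht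
  apply Circle.coe_injective
  rw [Circle.coe_exp, hh]
  push_cast
  rw [Finset.sum_mul, Complex.exp_sum]
  have hterm : ∀ j ∈ Finset.range (n+1),
      Complex.exp ((Complex.arg (u j t) : ℂ) * Complex.I) = (u j t : ℂ) := by
    intro j _
    have habs := Complex.norm_mul_exp_arg_mul_I (u j t : ℂ)
    rwa [Circle.norm_coe, Complex.ofReal_one, one_mul] at habs
  rw [Finset.prod_congr rfl hterm]
  have hp := hprod t ht (n+1) le_rfl
  have hNN : (((n+1:ℕ)):ℝ)/N = 1 := by
    rw [hN]; push_cast; rw [div_self]; positivity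
  rw [hNN] at hp
  have hmm : min (max t 0) 1 = t := by
    rw [max_eq_left ht.1, min_eq_left ht.2]
  rw [hmm, hf0, div_one] at hp
  calc (∏ j ∈ Finset.range (n+1), (u j t : ℂ))
      = ((∏ j ∈ Finset.range (n+1), u j t : Circle) : ℂ) :=
        (map_prod Circle.coeHom (fun j => u j t) (Finset.range (n+1))).symm
    _ = (f t : ℂ) := by rw [hp]

/-- A loop symmetric under time reversal is null-homotopic. -/
lemma symm_loop_null {X : Type*} [TopologicalSpace X] {x : X} (p : Path x x)
    (hsym : ∀ t : unitInterval, p t = p (unitInterval.symm t)) :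
    p.Homotopic (Path.refl x) := by
  have hcont : Continuous fun st : unitInterval × unitInterval =>
      p.extend ((1 - (st.1 : ℝ)) * min (st.2 : ℝ) (1 - (st.2 : ℝ))) := by
    apply p.continuous_extend.comp
    fun_prop
  refine ⟨⟨⟨⟨fun st => p.extend ((1 - (st.1 : ℝ)) * min (st.2 : ℝ) (1 - (st.2 : ℝ))), hcont⟩,
    ?_, ?_⟩, ?_⟩⟩
  · -- map_zero_left
    intro t
    simp only [ContinuousMap.coe_mk, Icc.coe_zero, sub_zero, one_mul]
    rcases le_total (t : ℝ) (1 - (t : ℝ)) with h | h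
    · rw [min_eq_left h]
      exact p.extend_extends' t
    · rw [min_eq_right h]
      have h2 : ((unitInterval.symm t : unitInterval) : ℝ) = 1 - (t : ℝ) :=
        unitInterval.coe_symm_eq t
      rw [← h2, p.extend_extends' (unitInterval.symm t)]
      exact (hsym t).symm
  · -- map_one_left
    intro t
    show p.extend ((1 - ((1 : unitInterval) : ℝ)) * _) = _
    rw [Icc.coe_one, sub_self, zero_mul, Path.extend_zero]
    rfl
  · -- prop'
    intro s t ht
    simp only [Set.mem_insert_iff, Set.mem_singleton_iff] at ht
    rcases ht with rfl | rfl
    · show p.extend ((1 - (s : ℝ)) * min (((0:unitInterval)) : ℝ) (1 - (((0:unitInterval)) : ℝ))) = _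
      rw [Icc.coe_zero]
      rw [show min (0:ℝ) (1 - 0) = 0 from by norm_num, mul_zero, Path.extend_zero]
      exact p.source.symm
    · show p.extend ((1 - (s : ℝ)) * min (((1:unitInterval)) : ℝ) (1 - (((1:unitInterval)) : ℝ))) = _
      rw [Icc.coe_one]
      rw [show min (1:ℝ) (1 - 1) = 0 from by norm_num, mul_zero, Path.extend_zero]
      have := p.target
      show x = p 1
      rw [this]

/-- helper: cast preserves homotopy -/
lemma homotopic_cast {X : Type*} [TopologicalSpace X] {a b a' b' : X} (p q : Path a b)
    (h : p.Homotopic q) (ha : a' = a) (hb : b' = b) :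
    (p.cast ha hb).Homotopic (q.cast ha hb) := by
  subst ha; subst hb
  exact h

noncomputable def Pmap : ℝ × ℝ × ℝ → XT :=
  fun x => qm (Circle.exp x.1, Circle.exp x.2.1, Circle.exp x.2.2)

lemma continuous_Pmap : Continuous Pmap := by
  apply continuous_qm.comp
  exact (Circle.exp.continuous.comp continuous_fst).prodMk
    ((Circle.exp.continuous.comp (continuous_fst.comp continuous_snd)).prodMk
      (Circle.exp.continuous.comp (continuous_snd.comp continuous_snd)))

lemma Pmap_zero : Pmap 0 = qm 1 := by
  show qm (Circle.exp 0, Circle.exp 0, Circle.exp 0) = qm 1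
  rw [Circle.exp_zero]
  rfl

/-- Every loop at the basepoint is null-homotopic. -/
lemma loop_null (γ : Path (qm (1:T3)) (qm 1)) : γ.Homotopic (Path.refl _) := by
  classical
  set g : ℝ → XT := ⇑γ.extend with hg
  have hgc : Continuous g := γ.continuous_extend
  have hg0 : ∀ t, t ≤ 0 → g t = qm 1 := fun t ht => γ.extend_of_le_zero ht
  have hg1 : ∀ t, 1 ≤ t → g t = qm 1 := fun t ht => γ.extend_of_one_le ht
  obtain ⟨gt, hgtc, hgtq⟩ := global_lift hgc hg0 hg1
  have hgt0 : gt 0 = 1 := fiber_fixed one_mem_Fset (by rw [hgtq 0, hg0 0 le_rfl])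
  have hgt1 : gt 1 = 1 := fiber_fixed one_mem_Fset (by rw [hgtq 1, hg1 1 le_rfl])
  obtain ⟨h₁, hh₁c, hh₁0, hh₁⟩ := circle_lift (continuous_fst.comp hgtc)
    (by show (gt 0).1 = 1; rw [hgt0]; rfl)
  obtain ⟨h₂, hh₂c, hh₂0, hh₂⟩ := circle_lift ((continuous_fst.comp continuous_snd).comp hgtc)
    (by show (gt 0).2.1 = 1; rw [hgt0]; rfl)
  obtain ⟨h₃, hh₃c, hh₃0, hh₃⟩ := circle_lift ((continuous_snd.comp continuous_snd).comp hgtc)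
    (by show (gt 0).2.2 = 1; rw [hgt0]; rfl)
  set H : ℝ → ℝ × ℝ × ℝ := fun t => (h₁ t, h₂ t, h₃ t) with hH
  have hHc : Continuous H := hh₁c.prodMk (hh₂c.prodMk hh₃c)
  set m : ℝ × ℝ × ℝ := H 1 with hm
  have hkey : ∀ t ∈ Icc (0:ℝ) 1, Pmap (H t) = g t := by
    intro t ht
    have heq : (Circle.exp (h₁ t), Circle.exp (h₂ t), Circle.exp (h₃ t)) = gt t := by
      rw [hh₁ t ht, hh₂ t ht, hh₃ t ht]
      rfl
    show qm (Circle.exp (h₁ t), Circle.exp (h₂ t), Circle.exp (h₃ t)) = g t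
    rw [show (Circle.exp (h₁ t), Circle.exp (h₂ t), Circle.exp (h₃ t)) = gt t from heq]
    exact hgtq t
  have hH0 : H 0 = 0 := by
    simp only [hH, hh₁0, hh₂0, hh₃0]; rfl
  have h1I : (1:ℝ) ∈ Icc (0:ℝ) 1 := by norm_num
  have hexp_m : Circle.exp m.1 = 1 ∧ Circle.exp m.2.1 = 1 ∧ Circle.exp m.2.2 = 1 := by
    refine ⟨?_, ?_, ?_⟩
    · show Circle.exp (h₁ 1) = 1
      rw [hh₁ 1 h1I]
      show (gt 1).1 = 1
      rw [hgt1]; rfl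
    · show Circle.exp (h₂ 1) = 1
      rw [hh₂ 1 h1I]
      show (gt 1).2.1 = 1
      rw [hgt1]; rfl
    · show Circle.exp (h₃ 1) = 1
      rw [hh₃ 1 h1I]
      show (gt 1).2.2 = 1
      rw [hgt1]; rfl
  -- paths in ℝ³
  set cpath : Path (0 : ℝ × ℝ × ℝ) m :=
    ⟨⟨fun t => H (t : ℝ), hHc.comp continuous_subtype_val⟩, by simp [hH0], rfl⟩ with hcpath
  set lpath : Path (0 : ℝ × ℝ × ℝ) m :=
    ⟨⟨fun t => ((t : ℝ)) • m, (continuous_subtype_val.smul continuous_const)⟩,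
      by simp, by simp⟩ with hlpath
  have hom1 : cpath.Homotopic lpath := SimplyConnectedSpace.paths_homotopic _ _
  have hom2 : (cpath.map continuous_Pmap).Homotopic (lpath.map continuous_Pmap) :=
    hom1.map ⟨Pmap, continuous_Pmap⟩
  have hPm : Pmap m = qm 1 := by
    rw [Pmap]
    simp only [hexp_m.1, hexp_m.2.1, hexp_m.2.2]
    rfl
  set A : Path (qm (1:T3)) (qm 1) := (cpath.map continuous_Pmap).cast Pmap_zero.symm hPm.symm
    with hA
  set B : Path (qm (1:T3)) (qm 1) := (lpath.map continuous_Pmap).cast Pmap_zero.symm hPm.symm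
    with hB
  have homAB : A.Homotopic B := homotopic_cast _ _ hom2 _ _
  have hγA : γ = A := by
    apply Path.ext
    funext t
    have h1 : A t = Pmap (H (t : ℝ)) := rfl
    rw [h1, hkey (t : ℝ) t.2, hg]
    exact (γ.extend_extends' t).symm
  have hBsym : ∀ t : unitInterval, B t = B (unitInterval.symm t) := by
    intro t
    have h1 : B t = Pmap (((t:ℝ)) • m) := rfl
    have h2 : B (unitInterval.symm t) = Pmap ((1 - (t:ℝ)) • m) := by
      show Pmap ((((unitInterval.symm t) : ℝ)) • m) = _
      rw [unitInterval.coe_symm_eq]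
    rw [h1, h2]
    have h3 : (1 - (t:ℝ)) • m = (m.1 - (t:ℝ)*m.1, m.2.1 - (t:ℝ)*m.2.1, m.2.2 - (t:ℝ)*m.2.2) := by
      simp [Prod.smul_def, smul_eq_mul]
      constructor
      · ring
      constructor <;> ring
    have h4 : ((t:ℝ)) • m = ((t:ℝ)*m.1, (t:ℝ)*m.2.1, (t:ℝ)*m.2.2) := by
      simp [Prod.smul_def, smul_eq_mul]
    rw [h3, h4]
    show qm _ = qm _
    have e1 : Circle.exp (m.1 - (t:ℝ)*m.1) = (Circle.exp ((t:ℝ)*m.1))⁻¹ := by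
      rw [Circle.exp_sub, hexp_m.1]
      simp
    have e2 : Circle.exp (m.2.1 - (t:ℝ)*m.2.1) = (Circle.exp ((t:ℝ)*m.2.1))⁻¹ := by
      rw [Circle.exp_sub, hexp_m.2.1]
      simp
    have e3 : Circle.exp (m.2.2 - (t:ℝ)*m.2.2) = (Circle.exp ((t:ℝ)*m.2.2))⁻¹ := by
      rw [Circle.exp_sub, hexp_m.2.2]
      simp
    have htor : torusInv (Circle.exp ((t:ℝ)*m.1), Circle.exp ((t:ℝ)*m.2.1),
        Circle.exp ((t:ℝ)*m.2.2))
        = (Circle.exp (m.1 - (t:ℝ)*m.1), Circle.exp (m.2.1 - (t:ℝ)*m.2.1),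
          Circle.exp (m.2.2 - (t:ℝ)*m.2.2)) := by
      simp only [torusInv, e1, e2, e3]
    rw [← htor, qm_torusInv]
  have homB : B.Homotopic (Path.refl _) := symm_loop_null B hBsym
  rw [hγA]
  exact homAB.trans homB

lemma exp_arg (w : Circle) : Circle.exp (Complex.arg w) = w := by
  apply Circle.coe_injective
  rw [Circle.coe_exp]
  have := Complex.norm_mul_exp_arg_mul_I (w : ℂ)
  rwa [Circle.norm_coe, Complex.ofReal_one, one_mul] at this

lemma joined_base (y : XT) : Joined (qm (1:T3)) y := by
  obtain ⟨z, rfl⟩ := qm_surjective y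
  set a : ℝ × ℝ × ℝ := (Complex.arg z.1, Complex.arg z.2.1, Complex.arg z.2.2) with ha
  have h1 : Pmap a = qm z := by
    show qm (Circle.exp (Complex.arg z.1), Circle.exp (Complex.arg z.2.1),
      Circle.exp (Complex.arg z.2.2)) = qm z
    rw [exp_arg, exp_arg, exp_arg]
  rw [← Pmap_zero, ← h1]
  exact ⟨(PathConnectedSpace.somePath 0 a).map continuous_Pmap⟩

lemma pathConnected_XT : PathConnectedSpace XT :=
  ⟨⟨qm 1⟩, fun x y => (joined_base x).symm.trans (joined_base y)⟩

lemma XT_simplyConnected' : SimplyConnectedSpace XT := by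
  rw [simply_connected_iff_paths_homotopic]
  refine ⟨pathConnected_XT, ?_⟩
  have hEnd : ∀ e₁ e₂ : FundamentalGroupoid.mk (qm (1:T3)) ⟶ FundamentalGroupoid.mk (qm 1),
      e₁ = e₂ := by
    intro e₁ e₂
    refine Quotient.inductionOn₂ e₁ e₂ (fun p₁ p₂ => ?_)
    exact Quotient.sound ((loop_null p₁).trans (loop_null p₂).symm)
  intro x y
  constructor
  intro P Q
  let u : Path (qm (1:T3)) x := (joined_base x).somePath
  let v : Path (qm (1:T3)) y := (joined_base y).somePath
  let hu : FundamentalGroupoid.mk (qm (1:T3)) ⟶ FundamentalGroupoid.mk x := ⟦u⟧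
  let hv : FundamentalGroupoid.mk (qm (1:T3)) ⟶ FundamentalGroupoid.mk y := ⟦v⟧
  let P' : FundamentalGroupoid.mk x ⟶ FundamentalGroupoid.mk y := P
  let Q' : FundamentalGroupoid.mk x ⟶ FundamentalGroupoid.mk y := Q
  have he : hu ≫ P' ≫ Groupoid.inv hv = hu ≫ Q' ≫ Groupoid.inv hv := hEnd _ _
  have h1 : ∀ R : FundamentalGroupoid.mk x ⟶ FundamentalGroupoid.mk y,
      Groupoid.inv hu ≫ (hu ≫ R ≫ Groupoid.inv hv) ≫ hv = R := by
    intro R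
    simp
  have : P' = Q' := by
    rw [← h1 P', he, h1 Q']
  exact this


end XTProof

/-- The quotient `X_T = T³ / ι` is simply connected. -/
theorem XT_simplyConnected : SimplyConnectedSpace XT := by
  exact XTProof.XT_simplyConnected'
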